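/- If κ ≥ 2 and there exists a complete set of κ − 1 mutually projective Latin squares of order κ (κ − 1 pairwise distinct Latin squares of order κ, all with diagonal entries equal to the symbol 1, which are pairwise projective), then there exists a finite projective plane of order κ. -/

import Mathlib

/-- A finite geometry (finite linear space): any two distinct points lie on exactly one
common line, and every line contains at least two points. -/
def IsGeometry {P : Type*} (lines : Finset (Finset P)) : Prop :=
  (∀ p q : P, p ≠ q → ∃! ℓ, ℓ ∈ lines ∧ p ∈ ℓ ∧ q ∈ ℓ) ∧
  (∀ ℓ ∈ lines, 2 ≤ ℓ.card)

/-- No three of the four points `a, b, c, d` lie on a common line. -/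
def NoThreeCollinear {P : Type*} (lines : Finset (Finset P)) (a b c d : P) : Prop :=
  ∀ ℓ ∈ lines,
    ¬(a ∈ ℓ ∧ b ∈ ℓ ∧ c ∈ ℓ) ∧ ¬(a ∈ ℓ ∧ b ∈ ℓ ∧ d ∈ ℓ) ∧
    ¬(a ∈ ℓ ∧ c ∈ ℓ ∧ d ∈ ℓ) ∧ ¬(b ∈ ℓ ∧ c ∈ ℓ ∧ d ∈ ℓ)

/-- A finite projective plane of order κ. -/
def IsProjectivePlane {P : Type*} (lines : Finset (Finset P)) (κ : ℕ) : Prop :=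
  IsGeometry lines ∧
  (∀ ℓ₁ ∈ lines, ∀ ℓ₂ ∈ lines, ℓ₁ ≠ ℓ₂ → ∃ p, p ∈ ℓ₁ ∧ p ∈ ℓ₂) ∧
  (∃ a b c d : P, a ≠ b ∧ a ≠ c ∧ a ≠ d ∧ b ≠ c ∧ b ≠ d ∧ c ≠ d ∧
    NoThreeCollinear lines a b c d) ∧
  (∀ ℓ ∈ lines, ℓ.card = κ + 1)

/-- A Latin square of order κ: each symbol occurs exactly once in every row and
exactly once in every column. -/
def IsLatinSquare {κ : ℕ} (L : Fin κ → Fin κ → Fin κ) : Prop :=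
  (∀ i : Fin κ, Function.Bijective fun c => L i c) ∧
  (∀ c : Fin κ, Function.Bijective fun i => L i c)

/-- Two Latin squares are projective if for every row index `i` of the first and
every row index `j` of the second there is exactly one column where they agree. -/
def ProjectivePair {κ : ℕ} (L₁ L₂ : Fin κ → Fin κ → Fin κ) : Prop :=
  ∀ i j : Fin κ, ∃! c : Fin κ, L₁ i c = L₂ j c

namespace MPLSAux

/-- Index of a non-vertical affine line: class (constant lines or square number) × row. -/
abbrev MIdx (κ : ℕ) := Option (Fin (κ - 1)) × Fin κ

/-- Points: affine points plus points at infinity (one per parallel class). -/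
abbrev MPoint (κ : ℕ) := (Fin κ × Fin κ) ⊕ (Option (Option (Fin (κ - 1))))

variable {κ : ℕ} (Ls : Fin (κ - 1) → (Fin κ → Fin κ → Fin κ))

/-- The function whose graph is the affine line indexed by `a`. -/
def mf (a : MIdx κ) (c : Fin κ) : Fin κ :=
  match a.1 with
  | none => a.2
  | some s => Ls s a.2 c

@[simp] lemma mf_none (y c : Fin κ) : mf Ls (none, y) c = y := rfl
@[simp] lemma mf_some (s) (i c : Fin κ) : mf Ls (some s, i) c = Ls s i c := rfl

/-- Vertical line at column `c`, with its point at infinity. -/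
def vline (κ : ℕ) (c : Fin κ) : Finset (MPoint κ) :=
  (Finset.univ.image fun y => Sum.inl (c, y)) ∪ {Sum.inr none}

/-- Graph line of `mf a`, with its point at infinity. -/
def fline (a : MIdx κ) : Finset (MPoint κ) :=
  (Finset.univ.image fun c => Sum.inl (c, mf Ls a c)) ∪ {Sum.inr (some a.1)}

/-- The line at infinity. -/
def linf (κ : ℕ) : Finset (MPoint κ) := Finset.univ.image Sum.inr

/-- All lines. -/
def mlines : Finset (Finset (MPoint κ)) :=
  ((Finset.univ.image (vline κ)) ∪ (Finset.univ.image (fline Ls))) ∪ {linf κ}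

@[simp] lemma mem_vline_inl {c c' y : Fin κ} :
    (Sum.inl (c, y) : MPoint κ) ∈ vline κ c' ↔ c = c' := by
  simp [vline, eq_comm]

@[simp] lemma mem_vline_inr {c : Fin κ} {t} :
    (Sum.inr t : MPoint κ) ∈ vline κ c ↔ t = none := by
  simp [vline]

@[simp] lemma mem_fline_inl {a : MIdx κ} {c y : Fin κ} :
    (Sum.inl (c, y) : MPoint κ) ∈ fline Ls a ↔ mf Ls a c = y := by
  constructor
  · intro h
    simp only [fline, Finset.mem_union, Finset.mem_image, Finset.mem_singleton] at h
    rcases h with ⟨c₀, _, h⟩ | h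
    · obtain ⟨h1, h2⟩ := Prod.mk.injEq .. ▸ Sum.inl.injEq .. ▸ h
      simp_all
    · simp at h
  · intro h
    simp only [fline, Finset.mem_union, Finset.mem_image]
    exact Or.inl ⟨c, Finset.mem_univ c, by rw [h]⟩

@[simp] lemma mem_fline_inr {a : MIdx κ} {t} :
    (Sum.inr t : MPoint κ) ∈ fline Ls a ↔ t = some a.1 := by
  simp [fline]

@[simp] lemma mem_linf_inr {t} : (Sum.inr t : MPoint κ) ∈ linf κ := by
  simp [linf]

@[simp] lemma not_mem_linf_inl {x : Fin κ × Fin κ} :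
    (Sum.inl x : MPoint κ) ∉ linf κ := by
  simp [linf]

lemma mem_mlines {ℓ : Finset (MPoint κ)} :
    ℓ ∈ mlines Ls ↔ (∃ c, ℓ = vline κ c) ∨ (∃ a, ℓ = fline Ls a) ∨ ℓ = linf κ := by
  simp [mlines, eq_comm, or_assoc]
  exact or_rotate

lemma vline_mem (c : Fin κ) : vline κ c ∈ mlines Ls :=
  (mem_mlines Ls).2 (Or.inl ⟨c, rfl⟩)

lemma fline_mem (a : MIdx κ) : fline Ls a ∈ mlines Ls :=
  (mem_mlines Ls).2 (Or.inr (Or.inl ⟨a, rfl⟩))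

lemma linf_mem : (linf κ : Finset (MPoint κ)) ∈ mlines Ls :=
  (mem_mlines Ls).2 (Or.inr (Or.inr rfl))

lemma card_vline (c : Fin κ) : (vline κ c).card = κ + 1 := by
  rw [vline, Finset.card_union_of_disjoint (by simp),
    Finset.card_image_of_injective _ (fun a b h => by simpa using h)]
  simp

lemma card_fline (a : MIdx κ) : (fline Ls a).card = κ + 1 := by
  rw [fline, Finset.card_union_of_disjoint (by simp),
    Finset.card_image_of_injective _
      (fun c c' h => by simpa using (Prod.mk.injEq .. ▸ Sum.inl.injEq .. ▸ h).1)]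
  simp

lemma card_linf (hκ : 1 ≤ κ) : (linf κ : Finset (MPoint κ)).card = κ + 1 := by
  rw [linf, Finset.card_image_of_injective _ Sum.inr_injective]
  simp
  omega

variable (hκ : 2 ≤ κ) (hlatin : ∀ s, IsLatinSquare (Ls s))
  (hproj : ∀ s t, s ≠ t → ProjectivePair (Ls s) (Ls t))

include hlatin hproj in
lemma mf_agree_unique {a b : MIdx κ} (hab : a ≠ b) {c c' : Fin κ}
    (h : mf Ls a c = mf Ls b c) (h' : mf Ls a c' = mf Ls b c') : c = c' := by
  obtain ⟨o, i⟩ := a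
  obtain ⟨o', j⟩ := b
  match o, o' with
  | none, none =>
    simp only [mf_none] at h
    exact absurd (by simp [h]) hab
  | none, some t =>
    simp only [mf_none, mf_some] at h h'
    exact ((hlatin t).1 j).injective (h.symm.trans h')
  | some s, none =>
    simp only [mf_none, mf_some] at h h'
    exact ((hlatin s).1 i).injective (h.trans h'.symm)
  | some s, some t =>
    by_cases hst : s = t
    · subst hst
      simp only [mf_some] at h
      have : i = j := ((hlatin s).2 c).injective h
      exact absurd (by simp [this]) hab
    · obtain ⟨c₀, _, huniq⟩ := hproj s t hst i j
      simp only [mf_some] at h h'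
      rw [huniq c h, huniq c' h']

include hκ hlatin hproj in
lemma mf_exists_unique {c c' : Fin κ} (hcc : c ≠ c') (y y' : Fin κ) :
    ∃! a : MIdx κ, mf Ls a c = y ∧ mf Ls a c' = y' := by
  have hinj : Function.Injective (fun a : MIdx κ => (mf Ls a c, mf Ls a c')) := by
    intro a b hab
    by_contra hne
    obtain ⟨h1, h2⟩ := Prod.mk.injEq .. ▸ hab
    exact hcc (mf_agree_unique Ls hlatin hproj hne h1 h2)
  have hcard : Fintype.card (MIdx κ) = Fintype.card (Fin κ × Fin κ) := by
    simp [MIdx]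
    omega
  have hbij : Function.Bijective (fun a : MIdx κ => (mf Ls a c, mf Ls a c')) :=
    (Fintype.bijective_iff_injective_and_card _).mpr ⟨hinj, hcard⟩
  obtain ⟨a, ha⟩ := hbij.surjective (y, y')
  obtain ⟨ha1, ha2⟩ := Prod.mk.injEq .. ▸ ha
  exact ⟨a, ⟨ha1, ha2⟩, fun b ⟨hb1, hb2⟩ => hinj (by simp [ha1, ha2, hb1, hb2])⟩

include hlatin hproj in
lemma mf_agree_exists {a b : MIdx κ} (hab : a.1 ≠ b.1) :
    ∃ c, mf Ls a c = mf Ls b c := by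
  obtain ⟨o, i⟩ := a
  obtain ⟨o', j⟩ := b
  match o, o' with
  | none, none => simp at hab
  | none, some t =>
    obtain ⟨c, hc⟩ := ((hlatin t).1 j).surjective i
    exact ⟨c, by simpa using hc.symm⟩
  | some s, none =>
    obtain ⟨c, hc⟩ := ((hlatin s).1 i).surjective j
    exact ⟨c, by simpa using hc⟩
  | some s, some t =>
    obtain ⟨c, hc, _⟩ := hproj s t (by simpa using hab) i j
    exact ⟨c, hc⟩

include hlatin in
lemma exuniq_mixed (c y : Fin κ) (t' : Option (Option (Fin (κ - 1)))) :
    ∃! ℓ, ℓ ∈ mlines Ls ∧ (Sum.inl (c, y) : MPoint κ) ∈ ℓ ∧ (Sum.inr t' : MPoint κ) ∈ ℓ := by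
  match t' with
  | none =>
    refine ⟨vline κ c, ⟨vline_mem Ls c, by simp, by simp⟩, ?_⟩
    rintro ℓ ⟨hm, hp, hq⟩
    rcases (mem_mlines Ls).1 hm with ⟨c₀, rfl⟩ | ⟨a, rfl⟩ | rfl
    · rw [mem_vline_inl] at hp; rw [hp]
    · rw [mem_fline_inr] at hq; simp at hq
    · exact absurd hp not_mem_linf_inl
  | some none =>
    refine ⟨fline Ls (none, y), ⟨fline_mem Ls _, by simp, by simp⟩, ?_⟩
    rintro ℓ ⟨hm, hp, hq⟩
    rcases (mem_mlines Ls).1 hm with ⟨c₀, rfl⟩ | ⟨a, rfl⟩ | rfl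
    · rw [mem_vline_inr] at hq; simp at hq
    · rw [mem_fline_inr] at hq
      obtain ⟨o, i⟩ := a
      simp only at hq
      obtain rfl : o = none := by simpa using hq.symm
      rw [mem_fline_inl] at hp
      simp only [mf_none] at hp
      rw [hp]
    · exact absurd hp not_mem_linf_inl
  | some (some s) =>
    obtain ⟨i, hi⟩ := ((hlatin s).2 c).surjective y
    refine ⟨fline Ls (some s, i), ⟨fline_mem Ls _, by simpa using hi, by simp⟩, ?_⟩
    rintro ℓ ⟨hm, hp, hq⟩
    rcases (mem_mlines Ls).1 hm with ⟨c₀, rfl⟩ | ⟨a, rfl⟩ | rfl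
    · rw [mem_vline_inr] at hq; simp at hq
    · rw [mem_fline_inr] at hq
      obtain ⟨o, j⟩ := a
      obtain rfl : o = some s := by simpa using hq.symm
      rw [mem_fline_inl] at hp
      simp only [mf_some] at hp
      obtain rfl : j = i := ((hlatin s).2 c).injective (hp.trans hi.symm)
      rfl
    · exact absurd hp not_mem_linf_inl

include hκ hlatin hproj in
lemma exuniq (p q : MPoint κ) (hpq : p ≠ q) :
    ∃! ℓ, ℓ ∈ mlines Ls ∧ p ∈ ℓ ∧ q ∈ ℓ := by
  obtain ⟨c, y⟩ | t := p <;> obtain ⟨c', y'⟩ | t' := q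
  · by_cases hc : c = c'
    · subst hc
      have hy : y ≠ y' := fun h => hpq (by rw [h])
      refine ⟨vline κ c, ⟨vline_mem Ls c, by simp, by simp⟩, ?_⟩
      rintro ℓ ⟨hm, hp, hq⟩
      rcases (mem_mlines Ls).1 hm with ⟨c₀, rfl⟩ | ⟨a, rfl⟩ | rfl
      · rw [mem_vline_inl] at hp; rw [hp]
      · rw [mem_fline_inl] at hp hq
        exact absurd (hp.symm.trans hq) hy
      · exact absurd hp not_mem_linf_inl
    · obtain ⟨a₀, ⟨h1, h2⟩, huniq⟩ := mf_exists_unique Ls hκ hlatin hproj hc y y'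
      refine ⟨fline Ls a₀, ⟨fline_mem Ls a₀, by simp [h1], by simp [h2]⟩, ?_⟩
      rintro ℓ ⟨hm, hp, hq⟩
      rcases (mem_mlines Ls).1 hm with ⟨c₀, rfl⟩ | ⟨a, rfl⟩ | rfl
      · rw [mem_vline_inl] at hp hq; exact absurd (hp.trans hq.symm) hc
      · rw [mem_fline_inl] at hp hq
        rw [huniq a ⟨hp, hq⟩]
      · exact absurd hp not_mem_linf_inl
  · exact exuniq_mixed Ls hlatin c y t'
  · obtain ⟨ℓ, ⟨h1, h2, h3⟩, hu⟩ := exuniq_mixed Ls hlatin c' y' t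
    exact ⟨ℓ, ⟨h1, h3, h2⟩, fun m ⟨m1, m2, m3⟩ => hu m ⟨m1, m3, m2⟩⟩
  · have ht : t ≠ t' := fun h => hpq (by rw [h])
    refine ⟨linf κ, ⟨linf_mem Ls, by simp, by simp⟩, ?_⟩
    rintro ℓ ⟨hm, hp, hq⟩
    rcases (mem_mlines Ls).1 hm with ⟨c₀, rfl⟩ | ⟨a, rfl⟩ | rfl
    · rw [mem_vline_inr] at hp hq; exact absurd (hp.trans hq.symm) ht
    · rw [mem_fline_inr] at hp hq; exact absurd (hp.trans hq.symm) ht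
    · rfl

include hlatin hproj in
lemma meet (ℓ₁ : Finset (MPoint κ)) (h1 : ℓ₁ ∈ mlines Ls)
    (ℓ₂ : Finset (MPoint κ)) (h2 : ℓ₂ ∈ mlines Ls) :
    ∃ p, p ∈ ℓ₁ ∧ p ∈ ℓ₂ := by
  rcases (mem_mlines Ls).1 h1 with ⟨c, rfl⟩ | ⟨a, rfl⟩ | rfl <;>
    rcases (mem_mlines Ls).1 h2 with ⟨c', rfl⟩ | ⟨b, rfl⟩ | rfl
  · exact ⟨Sum.inr none, by simp, by simp⟩
  · exact ⟨Sum.inl (c, mf Ls b c), by simp, by simp⟩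
  · exact ⟨Sum.inr none, by simp, by simp⟩
  · exact ⟨Sum.inl (c', mf Ls a c'), by simp, by simp⟩
  · by_cases hab : a.1 = b.1
    · exact ⟨Sum.inr (some a.1), by simp, by simp [hab]⟩
    · obtain ⟨c, hc⟩ := mf_agree_exists Ls hlatin hproj hab
      exact ⟨Sum.inl (c, mf Ls a c), by simp, by simp [hc.symm]⟩
  · exact ⟨Sum.inr (some a.1), by simp, by simp⟩
  · exact ⟨Sum.inr none, by simp, by simp⟩
  · exact ⟨Sum.inr (some b.1), by simp, by simp⟩
  · exact ⟨Sum.inr none, by simp, by simp⟩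

end MPLSAux

/-- A complete set of κ − 1 mutually projective Latin squares of order κ ≥ 2 gives
rise to a finite projective plane of order κ. -/
theorem mpls_gives_plane {κ : ℕ} (hκ : 2 ≤ κ)
    (Ls : Fin (κ - 1) → (Fin κ → Fin κ → Fin κ))
    (hinj : Function.Injective Ls)
    (hlatin : ∀ s, IsLatinSquare (Ls s))
    (hdiag : ∀ s, ∀ i : Fin κ, Ls s i i = ⟨1, by omega⟩)
    (hproj : ∀ s t, s ≠ t → ProjectivePair (Ls s) (Ls t)) :
    ∃ (P : Type) (_ : Fintype P) (lines : Finset (Finset P)),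
      IsProjectivePlane lines κ := by
  classical
  open MPLSAux in
  refine ⟨MPoint κ, inferInstance, mlines Ls, ⟨?_, ?_⟩, ?_, ?_, ?_⟩
  · exact fun p q hpq => MPLSAux.exuniq Ls hκ hlatin hproj p q hpq
  · intro ℓ hm
    rcases (MPLSAux.mem_mlines Ls).1 hm with ⟨c, rfl⟩ | ⟨a, rfl⟩ | rfl
    · rw [MPLSAux.card_vline]; omega
    · rw [MPLSAux.card_fline]; omega
    · rw [MPLSAux.card_linf (by omega)]; omega
  · exact fun ℓ₁ h1 ℓ₂ h2 _ => MPLSAux.meet Ls hlatin hproj ℓ₁ h1 ℓ₂ h2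
  · -- four points, no three collinear
    have h01 : (⟨0, by omega⟩ : Fin κ) ≠ ⟨1, by omega⟩ := by
      simp [Fin.ext_iff]
    set c0 : Fin κ := ⟨0, by omega⟩
    set c1 : Fin κ := ⟨1, by omega⟩
    refine ⟨Sum.inl (c0, c0), Sum.inl (c0, c1), Sum.inl (c1, c0), Sum.inl (c1, c1),
      by simp [h01], by simp [h01], by simp [h01, h01.symm], by simp [h01],
      by simp [h01, h01.symm], by simp [h01], ?_⟩
    intro ℓ hm
    rcases (MPLSAux.mem_mlines Ls).1 hm with ⟨c, rfl⟩ | ⟨a, rfl⟩ | rfl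
    · refine ⟨?_, ?_, ?_, ?_⟩ <;> rintro ⟨hp, hq, hr⟩ <;>
        simp only [MPLSAux.mem_vline_inl] at hp hq hr <;>
        exact h01 (by rw [hp, hq] at * <;> first | exact hp.trans hr.symm | skip) 
    · refine ⟨?_, ?_, ?_, ?_⟩ <;> rintro ⟨hp, hq, hr⟩ <;>
        simp only [MPLSAux.mem_fline_inl] at hp hq hr
      · exact h01 (hp.symm.trans hq)
      · exact h01 (hp.symm.trans hq)
      · exact h01 (hq.symm.trans hr)
      · exact h01 (hq.symm.trans hr)
    · refine ⟨?_, ?_, ?_, ?_⟩ <;> rintro ⟨hp, _, _⟩ <;>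
        exact MPLSAux.not_mem_linf_inl hp
  · intro ℓ hm
    rcases (MPLSAux.mem_mlines Ls).1 hm with ⟨c, rfl⟩ | ⟨a, rfl⟩ | rfl
    · exact MPLSAux.card_vline c
    · exact MPLSAux.card_fline Ls a
    · exact MPLSAux.card_linf (by omega)
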